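/- arXiv:2004.04916 — 4 statements merged into one kernel-verified Lean document; each statement's English description precedes it below -/
import Mathlib

section
/- For 0 < β < 1/2 and 0 ≤ r ≤ t, the integral ∫₀ʳ [(t-s)^(-β) - (r-s)^(-β)]² ds is at most (2β / ((1-β)(1-2β))) · (t-r)^(1-2β). -/
open MeasureTheory Real

/-- Chord bound: for `e < 0`, `e ≠ -1` and `0 < u ≤ v`,
`(v - u) * v ^ e ≤ (v ^ (e+1) - u ^ (e+1)) / (e+1)`. -/
lemma aux_chord (e u v : ℝ) (he : e < 0) (he' : e ≠ -1) (hu : 0 < u) (huv : u ≤ v) :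
    (v - u) * v ^ e ≤ (v ^ (e + 1) - u ^ (e + 1)) / (e + 1) := by
  have h0 : (0:ℝ) ∉ Set.uIcc u v := by
    rw [Set.uIcc_of_le huv]
    intro h
    exact absurd h.1 (not_le.mpr hu)
  rw [← integral_rpow (Or.inr ⟨he', h0⟩)]
  have hconst : (v - u) * v ^ e = ∫ _ in u..v, v ^ e := by
    simp [smul_eq_mul]
  rw [hconst]
  apply intervalIntegral.integral_mono_on huv intervalIntegrable_const
  · apply ContinuousOn.intervalIntegrable
    apply ContinuousOn.rpow_const continuousOn_id
    intro x hx
    rw [Set.uIcc_of_le huv] at hx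
    exact Or.inl (ne_of_gt (lt_of_lt_of_le hu hx.1))
  · intro x hx
    exact Real.rpow_le_rpow_of_nonpos (lt_of_lt_of_le hu hx.1) hx.2 he.le

set_option maxHeartbeats 2000000 in
theorem stmt_0 (β r t : ℝ) (hβ0 : 0 < β) (hβ1 : β < 1/2) (hr : 0 ≤ r) (hrt : r ≤ t) :
    ∫ s in (0:ℝ)..r, ((t - s) ^ (-β) - (r - s) ^ (-β)) ^ 2
      ≤ (2 * β / ((1 - β) * (1 - 2 * β))) * (t - r) ^ (1 - 2 * β) := by
  have hq : 0 < 1 - 2 * β := by linarith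
  have h1β : 0 < 1 - β := by linarith
  rcases eq_or_lt_of_le hr with hr0 | hr0
  · -- r = 0
    rw [← hr0]
    rw [intervalIntegral.integral_same]
    exact mul_nonneg (div_nonneg (by linarith) (by positivity))
      (Real.rpow_nonneg (by linarith) _)
  rcases eq_or_lt_of_le hrt with ht0 | ht0
  · -- t = r
    rw [← ht0, sub_self, Real.zero_rpow (ne_of_gt hq), mul_zero]
    simp
  -- main case : 0 < r < t
  have hδ : 0 < t - r := by linarith
  -- integrabilities
  have I1 : IntervalIntegrable (fun s => (r - s) ^ (-(2*β))) volume 0 r := by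
    have := (intervalIntegral.intervalIntegrable_rpow' (a := 0) (b := r)
      (show (-1:ℝ) < -(2*β) by linarith)).comp_sub_left r
    simpa using this.symm
  have I2 : IntervalIntegrable (fun s => (t - s) ^ (-(2*β))) volume 0 r := by
    have := (intervalIntegral.intervalIntegrable_rpow' (a := t) (b := t - r)
      (show (-1:ℝ) < -(2*β) by linarith)).comp_sub_left t
    simpa using this
  have I3 : IntervalIntegrable (fun s => (t - s) ^ (-(2*β) - 1)) volume 0 r := by
    apply ContinuousOn.intervalIntegrable
    apply ContinuousOn.rpow_const (continuousOn_const.sub continuousOn_id)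
    intro x hx
    rw [Set.uIcc_of_le hr0.le] at hx
    exact Or.inl (ne_of_gt (by linarith [hx.2] : (0:ℝ) < t - x))
  have Ih : IntervalIntegrable
      (fun s => (r - s) ^ (-(2*β)) - (t - s) ^ (-(2*β))
        - 2 * β * (t - r) * (t - s) ^ (-(2*β) - 1)) volume 0 r :=
    (I1.sub I2).sub (I3.const_mul _)
  have Ig : IntervalIntegrable
      (fun s => ((t - s) ^ (-β) - (r - s) ^ (-β)) ^ 2) volume 0 r := by
    apply (I1.add I2).mono_fun
    · rw [Set.uIoc_of_le hr0.le, ← Measure.restrict_congr_set Ioo_ae_eq_Ioc]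
      apply ContinuousOn.aestronglyMeasurable _ measurableSet_Ioo
      apply ContinuousOn.pow
      apply ContinuousOn.sub
      · exact (continuousOn_const.sub continuousOn_id).rpow_const
          (fun x hx => Or.inl (by simp only [Set.mem_Ioo] at hx; intro h; simp only [Pi.sub_apply, id_eq] at h; nlinarith [hx.2]))
      · exact (continuousOn_const.sub continuousOn_id).rpow_const
          (fun x hx => Or.inl (by simp only [Set.mem_Ioo] at hx; intro h; simp only [Pi.sub_apply, id_eq] at h; nlinarith [hx.2]))
    · filter_upwards [ae_restrict_mem measurableSet_uIoc] with s hs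
      rw [Set.uIoc_of_le hr0.le] at hs
      have hrs : 0 ≤ r - s := by linarith [hs.2]
      have hts : 0 ≤ t - s := by linarith [hs.2]
      have ea : (r - s) ^ (-(2*β)) = ((r - s) ^ (-β)) ^ 2 := by
        rw [show -(2*β) = (-β) * (2:ℕ) by push_cast; ring, Real.rpow_mul hrs,
          Real.rpow_natCast]
      have eb : (t - s) ^ (-(2*β)) = ((t - s) ^ (-β)) ^ 2 := by
        rw [show -(2*β) = (-β) * (2:ℕ) by push_cast; ring, Real.rpow_mul hts,
          Real.rpow_natCast]
      simp only [Real.norm_eq_abs, ea, eb]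
      rw [abs_of_nonneg (sq_nonneg _), abs_of_nonneg (by positivity)]
      nlinarith [mul_nonneg (Real.rpow_nonneg hrs (-β)) (Real.rpow_nonneg hts (-β)),
        sq_nonneg ((t - s) ^ (-β) + (r - s) ^ (-β))]
  -- pointwise bound on [0, r)
  have hsub : ∀ s ∈ Set.Ico (0:ℝ) r,
      ((t - s) ^ (-β) - (r - s) ^ (-β)) ^ 2
        ≤ (r - s) ^ (-(2*β)) - (t - s) ^ (-(2*β))
          - 2 * β * (t - r) * (t - s) ^ (-(2*β) - 1) := by
    intro s hs
    have hu : 0 < r - s := by linarith [hs.2]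
    have hv : 0 < t - s := by linarith
    have huv : r - s ≤ t - s := by linarith
    have key := aux_chord (-β - 1) (r - s) (t - s) (by linarith)
      (by intro h; apply hβ0.ne'; linarith) hu huv
    rw [show -β - 1 + 1 = -β by ring] at key
    rw [div_neg, ← neg_div, neg_sub] at key
    have hab := (le_div_iff₀ hβ0).mp key
    have ea : (r - s) ^ (-(2*β)) = (r - s) ^ (-β) * (r - s) ^ (-β) := by
      rw [← Real.rpow_add hu]; ring_nf
    have eb : (t - s) ^ (-(2*β)) = (t - s) ^ (-β) * (t - s) ^ (-β) := by
      rw [← Real.rpow_add hv]; ring_nf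
    have ec : (t - s) ^ (-(2*β) - 1) = (t - s) ^ (-β) * (t - s) ^ (-β - 1) := by
      rw [← Real.rpow_add hv]; ring_nf
    have hbnn : (0:ℝ) ≤ (t - s) ^ (-β) := Real.rpow_nonneg hv.le _
    rw [ea, eb, ec]
    have hmul := mul_le_mul_of_nonneg_left hab hbnn
    have hdd : (t - s) - (r - s) = t - r := by ring
    rw [hdd] at hmul
    nlinarith [hmul]
  -- a.e. version on Icc
  have hae : (fun s => ((t - s) ^ (-β) - (r - s) ^ (-β)) ^ 2)
      ≤ᵐ[volume.restrict (Set.Icc (0:ℝ) r)]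
      (fun s => (r - s) ^ (-(2*β)) - (t - s) ^ (-(2*β))
        - 2 * β * (t - r) * (t - s) ^ (-(2*β) - 1)) := by
    have hne : ∀ᵐ (s : ℝ) ∂volume, s ≠ r := by
      rw [MeasureTheory.ae_iff]
      simp only [ne_eq, not_not, Set.setOf_eq_eq_singleton]
      exact measure_singleton r
    have hne' : ∀ᵐ (s : ℝ) ∂(volume.restrict (Set.Icc (0:ℝ) r)), s ≠ r :=
      hne.filter_mono (ae_mono Measure.restrict_le_self)
    filter_upwards [ae_restrict_mem measurableSet_Icc, hne'] with s hs hsne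
    exact hsub s ⟨hs.1, lt_of_le_of_ne hs.2 hsne⟩
  have hmono := intervalIntegral.integral_mono_ae_restrict hr0.le Ig Ih hae
  refine hmono.trans ?_
  -- compute the right-hand integral
  rw [intervalIntegral.integral_sub (I1.sub I2) (I3.const_mul _),
    intervalIntegral.integral_sub I1 I2,
    intervalIntegral.integral_const_mul]
  have c1 : ∫ s in (0:ℝ)..r, (r - s) ^ (-(2*β)) = r ^ (1 - 2*β) / (1 - 2*β) := by
    rw [intervalIntegral.integral_comp_sub_left (fun x => x ^ (-(2*β))) r]
    rw [sub_self, sub_zero, integral_rpow (Or.inl (by linarith))]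
    rw [show -(2*β) + 1 = 1 - 2*β by ring, Real.zero_rpow (ne_of_gt hq)]
    ring
  have c2 : ∫ s in (0:ℝ)..r, (t - s) ^ (-(2*β))
      = (t ^ (1 - 2*β) - (t - r) ^ (1 - 2*β)) / (1 - 2*β) := by
    rw [intervalIntegral.integral_comp_sub_left (fun x => x ^ (-(2*β))) t]
    rw [sub_zero, integral_rpow (Or.inl (by linarith))]
    rw [show -(2*β) + 1 = 1 - 2*β by ring]
  have c3 : ∫ s in (0:ℝ)..r, (t - s) ^ (-(2*β) - 1)
      = (t ^ (-(2*β)) - (t - r) ^ (-(2*β))) / (-(2*β)) := by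
    rw [intervalIntegral.integral_comp_sub_left (fun x => x ^ (-(2*β) - 1)) t]
    rw [sub_zero]
    have h0 : (0:ℝ) ∉ Set.uIcc (t - r) t := by
      rw [Set.uIcc_of_le (by linarith)]
      intro h
      exact absurd h.1 (not_le.mpr hδ)
    rw [integral_rpow (Or.inr ⟨by intro h; apply hβ0.ne'; linarith, h0⟩)]
    rw [show -(2*β) - 1 + 1 = -(2*β) by ring]
  rw [c1, c2, c3]
  -- key facts for final arithmetic
  have hA := aux_chord (-(2*β)) r t (by linarith) (by intro h; nlinarith) hr0 hrt
  rw [show -(2*β) + 1 = 1 - 2*β by ring] at hA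
  have hA' : (t - r) * t ^ (-(2*β)) * (1 - 2*β) ≤ t ^ (1 - 2*β) - r ^ (1 - 2*β) :=
    (le_div_iff₀ hq).mp hA
  have hZ : (t - r) ^ (1 - 2*β) = (t - r) * (t - r) ^ (-(2*β)) := by
    rw [show 1 - 2*β = 1 + -(2*β) by ring, Real.rpow_add hδ, Real.rpow_one]
  have hZnn : (0:ℝ) ≤ (t - r) ^ (-(2*β)) := Real.rpow_nonneg hδ.le _
  rw [hZ]
  have hTnn : (0:ℝ) ≤ t ^ (-(2*β)) := Real.rpow_nonneg (by linarith) _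
  have e3 : r ^ (1 - 2*β) / (1 - 2*β)
      - (t ^ (1 - 2*β) - (t - r) * (t - r) ^ (-(2*β))) / (1 - 2*β)
      - 2 * β * (t - r) * ((t ^ (-(2*β)) - (t - r) ^ (-(2*β))) / (-(2*β)))
      = (r ^ (1 - 2*β) - t ^ (1 - 2*β) + (t - r) * (t - r) ^ (-(2*β))
          + (1 - 2*β) * ((t - r) * t ^ (-(2*β)) - (t - r) * (t - r) ^ (-(2*β))))
        / (1 - 2*β) := by
    field_simp
    ring
  rw [e3, div_le_iff₀ hq] at *
  have hrhs : 2 * β / ((1 - β) * (1 - 2*β)) * ((t - r) * (t - r) ^ (-(2*β))) * (1 - 2*β)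
      = 2 * β / (1 - β) * ((t - r) * (t - r) ^ (-(2*β))) := by
    field_simp
  rw [hrhs]
  have hfr : 2 * β * ((t - r) * (t - r) ^ (-(2*β)))
      ≤ 2 * β / (1 - β) * ((t - r) * (t - r) ^ (-(2*β))) := by
    apply mul_le_mul_of_nonneg_right _ (by positivity)
    rw [le_div_iff₀ h1β]
    nlinarith
  nlinarith [hA', mul_nonneg (mul_nonneg hδ.le hZnn) hq.le]
end

section
/- Discrete Gronwall inequality with weakly singular kernel: let 0 < γ < 1, b > 0, and suppose nonnegative reals H_0, …, H_N satisfy H_n ≤ π_n + b · Σ_{l=0}^{n-1} (n-l)^(-γ) H_l for all 0 ≤ n ≤ N, where (π_n) is nonnegative and nondecreasing. Then H_n ≤ E_{1-γ}(Γ(1-γ) · n^(1-γ) · b) · π_n for all 0 ≤ n ≤ N, where E_a(x) = Σ_{k≥0} x^k / Γ(ak+1) is the Mittag-Leffler function. -/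
open Real Finset

open intervalIntegral MeasureTheory

/-- The Mittag-Leffler function `E_a(x) = ∑_{k≥0} x^k / Γ(a k + 1)`. -/
noncomputable def mittagLeffler (a x : ℝ) : ℝ := ∑' k : ℕ, x ^ k / Real.Gamma (a * k + 1)


set_option maxHeartbeats 1000000 in

lemma ml_summable {β x : ℝ} (hβ : 0 < β) (hx : 0 ≤ x) :
    Summable (fun k : ℕ => x ^ k / Real.Gamma (β * k + 1)) := by
  set y : ℝ := max 1 (x ^ (1/β)) with hy
  have hy1 : (1:ℝ) ≤ y := le_max_left _ _
  have hy0 : (0:ℝ) < y := lt_of_lt_of_le one_pos hy1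
  have hxy : x ≤ y ^ β := by
    rcases le_or_gt x 1 with h | h
    · exact h.trans (Real.one_le_rpow hy1 hβ.le)
    · calc x = (x ^ (1/β)) ^ β := by
            rw [← Real.rpow_mul hx, one_div, inv_mul_cancel₀ hβ.ne', Real.rpow_one]
        _ ≤ y ^ β := Real.rpow_le_rpow (Real.rpow_nonneg hx _) (le_max_right _ _) hβ.le
  set T : ℝ := ∑' m : ℕ, (2*y) ^ m / m.factorial with hT
  have hTle : ∀ m : ℕ, (2*y) ^ m / m.factorial ≤ T :=
    fun m => Summable.le_tsum (Real.summable_pow_div_factorial (2*y)) m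
      (fun i _ => by positivity)
  have hT0 : 0 < T := lt_of_lt_of_le (by positivity) (hTle 0)
  have key : ∀ j : ℕ, 1 ≤ β * j →
      x ^ j / Real.Gamma (β * j + 1) ≤ (2*y*T) * ((1/2) ^ β) ^ j := by
    intro j hj
    set m : ℕ := ⌊β * (j:ℝ)⌋₊ with hm
    have hm1 : 1 ≤ m := Nat.le_floor (by exact_mod_cast hj)
    have hm1' : (1:ℝ) ≤ m := by exact_mod_cast hm1
    have hmle : (m:ℝ) ≤ β * j := Nat.floor_le (by positivity)
    have hltm : β * j < m + 1 := Nat.lt_floor_add_one _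
    have hGam : (m.factorial : ℝ) ≤ Real.Gamma (β * j + 1) := by
      rw [← Real.Gamma_nat_eq_factorial]
      have h1 : ((m:ℝ) + 1) ∈ Set.Ici (2:ℝ) := by simp only [Set.mem_Ici]; linarith
      have h2 : (β * j + 1) ∈ Set.Ici (2:ℝ) := by simp only [Set.mem_Ici]; linarith
      have := Real.Gamma_strictMonoOn_Ici.monotoneOn h1 h2 (by linarith)
      simpa using this
    have hGam0 : (0:ℝ) < (m.factorial : ℝ) := by positivity
    have hnum : x ^ j ≤ y ^ ((m:ℝ) + 1) := by
      calc x ^ j ≤ (y ^ β) ^ j := pow_le_pow_left₀ hx hxy j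
        _ = y ^ (β * j) := by
            rw [← Real.rpow_natCast (y ^ β) j, ← Real.rpow_mul hy0.le]
        _ ≤ y ^ ((m:ℝ) + 1) := Real.rpow_le_rpow_of_exponent_le hy1 hltm.le
    have step1 : x ^ j / Real.Gamma (β * j + 1) ≤ y ^ ((m:ℝ)+1) / m.factorial := by
      apply div_le_div₀ (by positivity) hnum (by positivity) hGam
    have step2 : y ^ ((m:ℝ)+1) / m.factorial ≤ y * T * (1/2) ^ m := by
      have hsplit : y ^ ((m:ℝ)+1) = y * y ^ m := by
        rw [Real.rpow_add hy0, Real.rpow_one, Real.rpow_natCast]; ring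
      rw [hsplit]
      have e : y ^ m = (2*y) ^ m * (1/2:ℝ) ^ m := by
        rw [← mul_pow]; congr 1; ring
      have h2 : y ^ m / m.factorial ≤ T * (1/2)^m := by
        calc y ^ m / m.factorial = (2*y)^m / m.factorial * (1/2:ℝ)^m := by rw [e]; ring
          _ ≤ T * (1/2)^m := mul_le_mul_of_nonneg_right (hTle m) (by positivity)
      calc y * y ^ m / m.factorial = y * (y ^ m / m.factorial) := by ring
        _ ≤ y * (T * (1/2)^m) := mul_le_mul_of_nonneg_left h2 hy0.le
        _ = y * T * (1/2)^m := by ring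
    have step3 : ((1:ℝ)/2) ^ m ≤ 2 * ((1/2) ^ β) ^ j := by
      have e1 : ((1:ℝ)/2) ^ m = (1/2 : ℝ) ^ (m:ℝ) := by rw [Real.rpow_natCast]
      rw [e1]
      have h1 : ((1:ℝ)/2) ^ (m:ℝ) ≤ (1/2 : ℝ) ^ (β * j - 1) := by
        apply Real.rpow_le_rpow_of_exponent_ge (by norm_num) (by norm_num)
        linarith
      have h2 : ((1:ℝ)/2) ^ (β * j - 1) = 2 * ((1/2:ℝ) ^ β) ^ j := by
        rw [Real.rpow_sub (by norm_num), Real.rpow_one,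
          ← Real.rpow_natCast ((1/2:ℝ) ^ β) j, ← Real.rpow_mul (by norm_num)]
        ring
      linarith
    calc x ^ j / Real.Gamma (β * j + 1) ≤ y * T * (1/2) ^ m := step1.trans step2
      _ ≤ y * T * (2 * ((1/2)^β)^j) := mul_le_mul_of_nonneg_left step3 (by positivity)
      _ = (2*y*T) * ((1/2)^β)^j := by ring
  set k0 : ℕ := ⌈1/β⌉₊ with hk0
  have hr0 : (0:ℝ) ≤ (1/2) ^ β := Real.rpow_nonneg (by norm_num) _
  have hr1 : ((1:ℝ)/2) ^ β < 1 := Real.rpow_lt_one (by norm_num) (by norm_num) hβ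
  rw [← summable_nat_add_iff k0]
  have hnn : ∀ k : ℕ, 0 ≤ x ^ (k + k0) / Real.Gamma (β * (k + k0 : ℕ) + 1) := by
    intro k
    have : (0:ℝ) < β * (k + k0 : ℕ) + 1 := by positivity
    exact div_nonneg (pow_nonneg hx _) (Real.Gamma_pos_of_pos this).le
  refine Summable.of_nonneg_of_le hnn ?_
    (((summable_geometric_of_lt_one hr0 hr1).mul_left ((2*y*T) * ((1/2)^β)^k0)))
  · intro k
    have hb1 : 1 ≤ β * k0 := by
      have h := Nat.le_ceil (1/β)
      calc (1:ℝ) = β * (1/β) := by field_simp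
        _ ≤ β * k0 := by
            apply mul_le_mul_of_nonneg_left _ hβ.le
            exact_mod_cast h
    have h1 : 1 ≤ β * ((k + k0 : ℕ):ℝ) := by
      push_cast
      nlinarith [hβ.le, Nat.cast_nonneg (α := ℝ) k]
    have := key (k + k0) h1
    calc x ^ (k + k0) / Real.Gamma (β * (k + k0 : ℕ) + 1)
        ≤ (2*y*T) * ((1/2)^β)^(k+k0) := this
      _ = ((2*y*T) * ((1/2)^β)^k0) * ((1/2)^β)^k := by rw [pow_add]; ring

lemma betaReal {u v : ℝ} (hu : 0 < u) (hv : 0 < v) :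
    ∫ x in (0:ℝ)..1, x ^ (u-1) * (1-x) ^ (v-1) =
      Real.Gamma u * Real.Gamma v / Real.Gamma (u+v) := by
  have key := Complex.Gamma_mul_Gamma_eq_betaIntegral (s := (u:ℂ)) (t := (v:ℂ))
    (by simpa using hu) (by simpa using hv)
  have hbeta : Complex.betaIntegral u v =
      ((∫ x in (0:ℝ)..1, x ^ (u-1) * (1-x) ^ (v-1) : ℝ) : ℂ) := by
    rw [Complex.betaIntegral]
    rw [← intervalIntegral.integral_ofReal]
    apply intervalIntegral.integral_congr
    intro x hx
    rw [Set.uIcc_of_le (by norm_num : (0:ℝ) ≤ 1)] at hx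
    obtain ⟨hx0, hx1⟩ := hx
    show (x:ℂ) ^ ((u:ℂ)-1) * (1-(x:ℂ)) ^ ((v:ℂ)-1) = ((x ^ (u-1) * (1-x) ^ (v-1) : ℝ) : ℂ)
    have e1 : ((u:ℂ) - 1) = ((u - 1 : ℝ) : ℂ) := by push_cast; ring
    have e2 : ((v:ℂ) - 1) = ((v - 1 : ℝ) : ℂ) := by push_cast; ring
    have e3 : (1 - (x:ℂ)) = ((1 - x : ℝ) : ℂ) := by push_cast; ring
    rw [e1, e2, e3, ← Complex.ofReal_cpow hx0, ← Complex.ofReal_cpow (by linarith),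
      ← Complex.ofReal_mul]
  rw [hbeta, Complex.Gamma_ofReal, Complex.Gamma_ofReal, ← Complex.ofReal_add,
    Complex.Gamma_ofReal, ← Complex.ofReal_mul, ← Complex.ofReal_mul] at key
  have := Complex.ofReal_inj.mp key
  have hpos : 0 < Real.Gamma (u+v) := Real.Gamma_pos_of_pos (by linarith)
  field_simp
  linarith [this]

lemma integ_val {a p γ : ℝ} (ha : 0 < a) (hp : 0 ≤ p) (hγ0 : 0 < γ) (hγ1 : γ < 1) :
    ∫ s in (0:ℝ)..a, s ^ p * (a - s) ^ (-γ) =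
      a ^ (p + 1 - γ) * (Real.Gamma (p+1) * Real.Gamma (1-γ) / Real.Gamma (p+1+(1-γ))) := by
  have key := smul_integral_comp_mul_left (a := 0) (b := 1)
    (fun s => s ^ p * (a - s) ^ (-γ)) a
  rw [mul_zero, mul_one] at key
  rw [← key]
  have hcongr : ∀ x ∈ Set.uIcc (0:ℝ) 1,
      (a * x) ^ p * (a - a * x) ^ (-γ) = (a ^ p * a ^ (-γ)) * (x ^ p * (1-x) ^ (-γ)) := by
    intro x hx
    rw [Set.uIcc_of_le (by norm_num : (0:ℝ) ≤ 1)] at hx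
    obtain ⟨hx0, hx1⟩ := hx
    have e1 : a - a * x = a * (1 - x) := by ring
    rw [e1, Real.mul_rpow ha.le hx0, Real.mul_rpow ha.le (by linarith)]
    ring
  rw [intervalIntegral.integral_congr hcongr, intervalIntegral.integral_const_mul]
  have hbeta : ∫ x in (0:ℝ)..1, x ^ p * (1-x) ^ (-γ) =
      Real.Gamma (p+1) * Real.Gamma (1-γ) / Real.Gamma (p+1+(1-γ)) := by
    have := betaReal (u := p+1) (v := 1-γ) (by linarith) (by linarith)
    simpa using this
  rw [hbeta, smul_eq_mul]
  have : a * (a ^ p * a ^ (-γ)) = a ^ (p + 1 - γ) := by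
    rw [show p + 1 - γ = p + (1 + -γ) by ring, Real.rpow_add ha, Real.rpow_add ha,
      Real.rpow_one]
    ring
  rw [← this]; ring

lemma integ_int {a p γ : ℝ} (c d : ℝ) (hp : 0 ≤ p) (hγ0 : 0 < γ) (hγ1 : γ < 1) :
    IntervalIntegrable (fun s => s ^ p * (a - s) ^ (-γ)) volume c d := by
  have h1 : IntervalIntegrable (fun s : ℝ => (a - s) ^ (-γ)) volume c d := by
    have := (intervalIntegrable_rpow' (a := a - c) (b := a - d)
      (by linarith : (-1:ℝ) < -γ)).comp_sub_left a
    simpa using this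
  have hc : ContinuousOn (fun s : ℝ => s ^ p) (Set.uIcc c d) := by
    exact (continuous_iff_continuousAt.mpr
      (fun s => Real.continuousAt_rpow_const s p (Or.inr hp))).continuousOn
  exact h1.continuousOn_mul hc

lemma sum_le_integral_conv {n : ℕ} (hn : 1 ≤ n) {p γ : ℝ} (hp : 0 ≤ p)
    (hγ0 : 0 < γ) (hγ1 : γ < 1) :
    ∑ l ∈ Finset.range n, (l:ℝ) ^ p * ((n:ℝ) - l) ^ (-γ) ≤
      ∫ s in (0:ℝ)..(n:ℝ), s ^ p * ((n:ℝ) - s) ^ (-γ) := by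
  set f : ℝ → ℝ := fun s => s ^ p * ((n:ℝ) - s) ^ (-γ) with hf
  have hint : ∀ k : ℕ, k < n → IntervalIntegrable f volume ((k:ℕ):ℝ) ((k+1:ℕ):ℝ) :=
    fun k _ => integ_int _ _ hp hγ0 hγ1
  have hsplit := intervalIntegral.sum_integral_adjacent_intervals (a := fun k : ℕ => (k:ℝ))
    (μ := volume) (f := f) hint
  simp only [Nat.cast_zero] at hsplit
  rw [← hsplit]
  apply Finset.sum_le_sum
  intro l hl
  rw [Finset.mem_range] at hl
  have hl1 : (l:ℝ) + 1 ≤ (n:ℝ) := by exact_mod_cast hl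
  have hstep : f l ≤ ∫ s in ((l:ℕ):ℝ)..((l+1:ℕ):ℝ), f s := by
    have hconst : IntervalIntegrable (fun _ : ℝ => f l) volume ((l:ℕ):ℝ) ((l+1:ℕ):ℝ) :=
      intervalIntegrable_const
    have hfi := integ_int (a := (n:ℝ)) ((l:ℕ):ℝ) ((l+1:ℕ):ℝ) hp hγ0 hγ1
    have hab : ((l:ℕ):ℝ) ≤ ((l+1:ℕ):ℝ) := by push_cast; linarith
    have hae : (fun _ : ℝ => f l) ≤ᵐ[volume.restrict (Set.Icc ((l:ℕ):ℝ) ((l+1:ℕ):ℝ))] f := by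
      have h1 : ∀ᵐ s ∂(volume.restrict (Set.Icc ((l:ℕ):ℝ) ((l+1:ℕ):ℝ))),
          s ∈ Set.Icc ((l:ℕ):ℝ) ((l+1:ℕ):ℝ) := ae_restrict_mem measurableSet_Icc
      have h2 : ∀ᵐ s ∂(volume.restrict (Set.Icc ((l:ℕ):ℝ) ((l+1:ℕ):ℝ))), s ≠ (n:ℝ) := by
        apply ae_restrict_of_ae
        refine ae_iff.mpr ?_
        simpa using measure_singleton (α := ℝ) (n:ℝ)
      filter_upwards [h1, h2] with s hs hsn
      obtain ⟨hs1, hs2⟩ := hs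
      push_cast at hs1 hs2
      have hsl : (l:ℝ) ≤ s := hs1
      have hsn' : s < (n:ℝ) := lt_of_le_of_ne (by linarith) hsn
      have h0l : (0:ℝ) ≤ (l:ℝ) := Nat.cast_nonneg l
      have hns : (0:ℝ) < (n:ℝ) - s := by linarith
      show (l:ℝ) ^ p * ((n:ℝ) - l) ^ (-γ) ≤ s ^ p * ((n:ℝ) - s) ^ (-γ)
      have e1 : (l:ℝ) ^ p ≤ s ^ p := Real.rpow_le_rpow h0l hsl hp
      have e2 : ((n:ℝ) - l) ^ (-γ) ≤ ((n:ℝ) - s) ^ (-γ) := by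
        rw [Real.rpow_neg (by linarith), Real.rpow_neg hns.le]
        have g1 : (0:ℝ) < ((n:ℝ) - s) ^ γ := Real.rpow_pos_of_pos hns _
        have g2 : ((n:ℝ) - s) ^ γ ≤ ((n:ℝ) - l) ^ γ :=
          Real.rpow_le_rpow hns.le (by linarith) hγ0.le
        exact inv_anti₀ g1 g2
      exact mul_le_mul e1 e2 (Real.rpow_nonneg (by linarith) _) (Real.rpow_nonneg (by linarith) _)
    calc f l = ∫ _ in ((l:ℕ):ℝ)..((l+1:ℕ):ℝ), f l := by
          rw [intervalIntegral.integral_const]; push_cast; rw [smul_eq_mul]; ring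
      _ ≤ ∫ s in ((l:ℕ):ℝ)..((l+1:ℕ):ℝ), f s :=
          intervalIntegral.integral_mono_ae_restrict hab hconst hfi hae
  simpa using hstep

lemma conv_bound {n : ℕ} (hn : 1 ≤ n) {p γ : ℝ} (hp : 0 ≤ p)
    (hγ0 : 0 < γ) (hγ1 : γ < 1) :
    ∑ l ∈ Finset.range n, (l:ℝ) ^ p * ((n:ℝ) - l) ^ (-γ) ≤
      Real.Gamma (p+1) * Real.Gamma (1-γ) / Real.Gamma (p+1+(1-γ)) * (n:ℝ) ^ (p+1-γ) := by
  have hn0 : (0:ℝ) < (n:ℝ) := by exact_mod_cast hn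
  have h1 := sum_le_integral_conv hn hp hγ0 hγ1
  rw [integ_val hn0 hp hγ0 hγ1] at h1
  calc ∑ l ∈ Finset.range n, (l:ℝ) ^ p * ((n:ℝ) - l) ^ (-γ)
      ≤ (n:ℝ) ^ (p + 1 - γ) *
        (Real.Gamma (p+1) * Real.Gamma (1-γ) / Real.Gamma (p+1+(1-γ))) := h1
    _ = Real.Gamma (p+1) * Real.Gamma (1-γ) / Real.Gamma (p+1+(1-γ)) * (n:ℝ) ^ (p+1-γ) := by
        ring

lemma key_step {γ b : ℝ} (hγ0 : 0 < γ) (hγ1 : γ < 1) (hb : 0 < b) {n : ℕ} (hn : 1 ≤ n) :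
    1 + b * ∑ l ∈ Finset.range n, ((n:ℝ) - l) ^ (-γ) *
        mittagLeffler (1-γ) (Real.Gamma (1-γ) * (l:ℝ) ^ (1-γ) * b) ≤
      mittagLeffler (1-γ) (Real.Gamma (1-γ) * (n:ℝ) ^ (1-γ) * b) := by
  set β : ℝ := 1 - γ with hβdef
  have hβ : 0 < β := by rw [hβdef]; linarith
  have hΓβ : 0 < Real.Gamma β := Real.Gamma_pos_of_pos hβ
  set c : ℝ := Real.Gamma β * b with hcdef
  have hc : 0 < c := mul_pos hΓβ hb
  set x : ℕ → ℝ := fun m => Real.Gamma β * (m:ℝ) ^ β * b with hxdef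
  have hx : ∀ m, 0 ≤ x m := fun m => by
    exact mul_nonneg (mul_nonneg hΓβ.le (Real.rpow_nonneg (Nat.cast_nonneg m) _)) hb.le
  have hxck : ∀ (m : ℕ) (k : ℕ), x m ^ k = c ^ k * (m:ℝ) ^ (β * k) := by
    intro m k
    have e1 : x m = c * (m:ℝ) ^ β := by rw [hxdef, hcdef]; ring
    rw [e1, mul_pow, ← Real.rpow_natCast ((m:ℝ) ^ β) k, ← Real.rpow_mul (Nat.cast_nonneg m)]
  set f : ℕ → ℝ := fun k => x n ^ k / Real.Gamma (β * k + 1) with hfdef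
  have hfs : Summable f := ml_summable hβ (hx n)
  set t : ℕ → ℝ := fun k => f (k + 1) with htdef
  have hts : Summable t := (summable_nat_add_iff 1).mpr hfs
  have hGpos : ∀ k : ℕ, (0:ℝ) < Real.Gamma (β * k + 1) := fun k =>
    Real.Gamma_pos_of_pos (by positivity)
  -- h l k
  set h : ℕ → ℕ → ℝ := fun l k => ((n:ℝ) - l) ^ (-γ) * (x l ^ k / Real.Gamma (β * k + 1))
    with hhdef
  have hsum_l : ∀ l ∈ Finset.range n, Summable (h l) := fun l _ =>
    (ml_summable hβ (hx l)).mul_left _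
  have hS : ∑ l ∈ Finset.range n, ((n:ℝ) - l) ^ (-γ) *
      mittagLeffler β (Real.Gamma β * (l:ℝ) ^ β * b) =
      ∑' k : ℕ, ∑ l ∈ Finset.range n, h l k := by
    rw [Summable.tsum_finsetSum hsum_l]
    apply Finset.sum_congr rfl
    intro l _
    rw [hhdef]
    simp only []
    rw [tsum_mul_left]
    rfl
  rw [hS]
  -- termwise bound
  have hterm : ∀ k : ℕ, b * ∑ l ∈ Finset.range n, h l k ≤ t k := by
    intro k
    have hp : (0:ℝ) ≤ β * k := by positivity
    have hGk := hGpos k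
    have hGk1 : (0:ℝ) < Real.Gamma (β * k + 1 + β) := Real.Gamma_pos_of_pos (by positivity)
    have hcb := conv_bound hn hp hγ0 hγ1
    have hsum_eq : ∑ l ∈ Finset.range n, h l k =
        (c ^ k / Real.Gamma (β * k + 1)) *
          ∑ l ∈ Finset.range n, (l:ℝ) ^ (β * k) * ((n:ℝ) - l) ^ (-γ) := by
      rw [Finset.mul_sum]
      apply Finset.sum_congr rfl
      intro l _
      rw [hhdef]; simp only []
      rw [hxck l k]; ring
    have e1 : β * k + 1 + (1 - γ) = β * k + 1 + β := by rw [hβdef]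
    have e2 : β * k + 1 - γ = β * ((k:ℝ) + 1) := by rw [hβdef]; ring
    have e3 : Real.Gamma (1 - γ) = Real.Gamma β := by rw [hβdef]
    rw [e1, e2, e3] at hcb
    calc b * ∑ l ∈ Finset.range n, h l k
        = (b * c ^ k / Real.Gamma (β * k + 1)) *
          ∑ l ∈ Finset.range n, (l:ℝ) ^ (β * k) * ((n:ℝ) - l) ^ (-γ) := by
          rw [hsum_eq]; ring
      _ ≤ (b * c ^ k / Real.Gamma (β * k + 1)) *
          (Real.Gamma (β * k + 1) * Real.Gamma β / Real.Gamma (β * k + 1 + β) *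
            (n:ℝ) ^ (β * ((k:ℝ) + 1))) := by
          apply mul_le_mul_of_nonneg_left hcb
          positivity
      _ = t k := by
          rw [htdef, hfdef]
          simp only []
          rw [hxck n (k+1)]
          have ecast : (((k:ℕ) + 1 : ℕ) : ℝ) = (k:ℝ) + 1 := by push_cast; ring
          rw [ecast]
          have e4 : β * ((k:ℝ) + 1) + 1 = β * k + 1 + β := by ring
          rw [e4]
          field_simp
          ring
  -- sum the bounds
  have hsumleft : Summable (fun k => b * ∑ l ∈ Finset.range n, h l k) :=
    (summable_sum hsum_l).mul_left b
  have hle : b * ∑' k : ℕ, ∑ l ∈ Finset.range n, h l k ≤ ∑' k, t k := by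
    rw [← tsum_mul_left]
    exact Summable.tsum_le_tsum hterm hsumleft hts
  have hzero : ∑' k, f k = f 0 + ∑' k, t k := Summable.tsum_eq_zero_add hfs
  have hf0 : f 0 = 1 := by
    rw [hfdef]; simp [Real.Gamma_one]
  have hMn : mittagLeffler β (Real.Gamma β * (n:ℝ) ^ β * b) = ∑' k, f k := rfl
  rw [hMn, hzero, hf0]
  linarith

theorem stmt_4 (N : ℕ) (γ b : ℝ) (hγ0 : 0 < γ) (hγ1 : γ < 1) (hb : 0 < b)
    (H pi : ℕ → ℝ)
    (hHpos : ∀ n ≤ N, 0 ≤ H n)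
    (hpipos : ∀ n ≤ N, 0 ≤ pi n)
    (hpimono : ∀ m n, m ≤ n → n ≤ N → pi m ≤ pi n)
    (hrec : ∀ n ≤ N, H n ≤ pi n + b * ∑ l ∈ Finset.range n, ((n : ℝ) - l) ^ (-γ) * H l) :
    ∀ n ≤ N, H n ≤ mittagLeffler (1 - γ) (Real.Gamma (1 - γ) * (n : ℝ) ^ (1 - γ) * b) * pi n := by
  have hβ : (0:ℝ) < 1 - γ := by linarith
  have hΓβ : 0 < Real.Gamma (1 - γ) := Real.Gamma_pos_of_pos hβ
  set M : ℕ → ℝ := fun m => mittagLeffler (1-γ) (Real.Gamma (1-γ) * (m:ℝ) ^ (1-γ) * b)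
    with hMdef
  have hxnn : ∀ m : ℕ, 0 ≤ Real.Gamma (1-γ) * (m:ℝ) ^ (1-γ) * b := fun m =>
    mul_nonneg (mul_nonneg hΓβ.le (Real.rpow_nonneg (Nat.cast_nonneg m) _)) hb.le
  have hM1 : ∀ m : ℕ, 1 ≤ M m := by
    intro m
    have hsum := ml_summable hβ (hxnn m)
    have h0 : (Real.Gamma (1-γ) * (m:ℝ) ^ (1-γ) * b) ^ (0:ℕ) /
        Real.Gamma ((1-γ) * (0:ℕ) + 1) = 1 := by
      simp [Real.Gamma_one]
    have := Summable.le_tsum hsum 0 (fun i _ => by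
      have : (0:ℝ) < Real.Gamma ((1-γ) * i + 1) := Real.Gamma_pos_of_pos (by positivity)
      exact div_nonneg (pow_nonneg (hxnn m) _) this.le)
    rw [h0] at this
    exact this
  intro n
  induction n using Nat.strong_induction_on with
  | _ n IH =>
    intro hnN
    rcases Nat.eq_zero_or_pos n with hn0 | hn1
    · subst hn0
      have h := hrec 0 hnN
      simp only [Finset.range_zero, Finset.sum_empty, mul_zero, add_zero] at h
      calc H 0 ≤ pi 0 := h
        _ = 1 * pi 0 := (one_mul _).symm
        _ ≤ M 0 * pi 0 := mul_le_mul_of_nonneg_right (hM1 0) (hpipos 0 hnN)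
    · have hstep : ∀ l ∈ Finset.range n, ((n:ℝ) - l) ^ (-γ) * H l ≤
          ((n:ℝ) - l) ^ (-γ) * M l * pi n := by
        intro l hl
        rw [Finset.mem_range] at hl
        have hlN : l ≤ N := le_trans (le_of_lt hl) hnN
        have h1 : H l ≤ M l * pi l := IH l hl hlN
        have h2 : pi l ≤ pi n := hpimono l n (le_of_lt hl) hnN
        have hM0 : 0 ≤ M l := le_trans zero_le_one (hM1 l)
        have hcoef : (0:ℝ) ≤ ((n:ℝ) - l) ^ (-γ) := by
          apply Real.rpow_nonneg
          have : (l:ℝ) < n := by exact_mod_cast hl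
          linarith
        calc ((n:ℝ) - l) ^ (-γ) * H l ≤ ((n:ℝ) - l) ^ (-γ) * (M l * pi l) :=
              mul_le_mul_of_nonneg_left h1 hcoef
          _ ≤ ((n:ℝ) - l) ^ (-γ) * (M l * pi n) := by
              apply mul_le_mul_of_nonneg_left _ hcoef
              exact mul_le_mul_of_nonneg_left h2 hM0
          _ = ((n:ℝ) - l) ^ (-γ) * M l * pi n := by ring
      have hpin : 0 ≤ pi n := hpipos n hnN
      calc H n ≤ pi n + b * ∑ l ∈ Finset.range n, ((n : ℝ) - l) ^ (-γ) * H l := hrec n hnN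
        _ ≤ pi n + b * ∑ l ∈ Finset.range n, ((n:ℝ) - l) ^ (-γ) * M l * pi n := by
            apply add_le_add_right
            exact mul_le_mul_of_nonneg_left (Finset.sum_le_sum hstep) hb.le
        _ = (1 + b * ∑ l ∈ Finset.range n, ((n:ℝ) - l) ^ (-γ) * M l) * pi n := by
            rw [← Finset.sum_mul]; ring
        _ ≤ M n * pi n := by
            apply mul_le_mul_of_nonneg_right _ hpin
            exact key_step hγ0 hγ1 hb hn1
end

section
/- Continuous Gronwall inequality with weakly singular kernel: let I = [0,1], g : I → ℝ continuous and nondecreasing, 0 < γ < 1, b > 0, and let H : I → ℝ be continuous and nonnegative with H(t) ≤ g(t) + b ∫₀ᵗ (t-s)^(-γ) H(s) ds for all t ∈ I. Then H(t) ≤ E_{1-γ}(Γ(1-γ) t^(1-γ) b) · g(t) for all t ∈ I. -/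
open Real MeasureTheory

namespace SGron

/-- A crude lower bound for the Gamma function. -/
lemma gamma_lb {A y : ℝ} (hA : 0 < A) (hy : 0 ≤ y) :
    A ^ y * (A * Real.exp (-(2 * A))) ≤ Real.Gamma (y + 1) := by
  rw [Real.Gamma_eq_integral (by linarith : (0:ℝ) < y + 1)]
  have hI : IntegrableOn (fun x : ℝ => Real.exp (-x) * x ^ (y + 1 - 1)) (Set.Ioi 0) :=
    Real.GammaIntegral_convergent (by linarith)
  have hsub : Set.Ioc A (2 * A) ⊆ Set.Ioi (0 : ℝ) := fun x hx => hA.trans hx.1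
  have hvol : volume (Set.Ioc A (2 * A)) = ENNReal.ofReal A := by
    rw [Real.volume_Ioc]; congr 1; ring
  have hpt : ∀ x ∈ Set.Ioc A (2 * A),
      Real.exp (-(2 * A)) * A ^ y ≤ Real.exp (-x) * x ^ (y + 1 - 1) := by
    intro x hx
    have h2 : Real.exp (-(2 * A)) ≤ Real.exp (-x) := Real.exp_le_exp.mpr (by linarith [hx.2])
    have h3 : A ^ y ≤ x ^ (y + 1 - 1) := by
      rw [show y + 1 - 1 = y by ring]
      exact Real.rpow_le_rpow hA.le hx.1.le hy
    exact mul_le_mul h2 h3 (Real.rpow_nonneg hA.le y) (Real.exp_pos _).le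
  have key := setIntegral_ge_of_const_le (μ := volume) (s := Set.Ioc A (2 * A))
    (f := fun x => Real.exp (-x) * x ^ (y + 1 - 1))
    measurableSet_Ioc (by rw [hvol]; exact ENNReal.ofReal_ne_top)
    hpt (hI.mono_set hsub)
  rw [measureReal_def, hvol, ENNReal.toReal_ofReal hA.le, smul_eq_mul] at key
  have h2 : (∫ x in Set.Ioc A (2 * A), Real.exp (-x) * x ^ (y + 1 - 1))
      ≤ ∫ x in Set.Ioi 0, Real.exp (-x) * x ^ (y + 1 - 1) := by
    refine setIntegral_mono_set hI ?_ (HasSubset.Subset.eventuallyLE hsub)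
    filter_upwards [self_mem_ae_restrict measurableSet_Ioi] with x hx
    exact mul_nonneg (Real.exp_pos _).le (Real.rpow_nonneg (le_of_lt hx) _)
  nlinarith [key, h2]

/-- The coefficients of the Mittag-Leffler-type series. -/
noncomputable def ck (α b : ℝ) (k : ℕ) : ℝ := (b * Real.Gamma α) ^ k / Real.Gamma (α * k + 1)

variable {α b : ℝ}

lemma gammak_pos (hα : 0 < α) (k : ℕ) : 0 < Real.Gamma (α * k + 1) :=
  Real.Gamma_pos_of_pos (by positivity)

lemma ck_nonneg (hα : 0 < α) (hb : 0 ≤ b) (k : ℕ) : 0 ≤ ck α b k :=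
  div_nonneg (pow_nonneg (mul_nonneg hb (Real.Gamma_pos_of_pos hα).le) k) (gammak_pos hα k).le

lemma ck_zero : ck α b 0 = 1 := by
  simp [ck, Real.Gamma_one]

lemma ck_summable (hα : 0 < α) (hb : 0 < b) : Summable (ck α b) := by
  have hc0 : 0 < b * Real.Gamma α := mul_pos hb (Real.Gamma_pos_of_pos hα)
  set c : ℝ := b * Real.Gamma α with hc
  set A : ℝ := max 1 ((2 * c) ^ α⁻¹) with hA
  have hA1 : (1:ℝ) ≤ A := le_max_left _ _
  have hA0 : (0:ℝ) < A := lt_of_lt_of_le one_pos hA1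
  have hAα : 2 * c ≤ A ^ α := by
    have h1 : (2 * c) ^ α⁻¹ ≤ A := le_max_right _ _
    have h2 : ((2 * c) ^ α⁻¹) ^ α ≤ A ^ α :=
      Real.rpow_le_rpow (Real.rpow_nonneg (by linarith) _) h1 hα.le
    rwa [Real.rpow_inv_rpow (by linarith) hα.ne'] at h2
  have hAa0 : 0 < A ^ α := Real.rpow_pos_of_pos hA0 α
  set K : ℝ := A * Real.exp (-(2 * A)) with hK
  have hK0 : 0 < K := mul_pos hA0 (Real.exp_pos _)
  have hle : ∀ k : ℕ, ck α b k ≤ (1/2) ^ k / K := by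
    intro k
    have hg : A ^ (α * k) * K ≤ Real.Gamma (α * k + 1) := by
      rw [hK]; exact gamma_lb hA0 (by positivity)
    have hApow : A ^ (α * (k:ℕ)) = (A ^ α) ^ (k:ℕ) := by
      rw [← Real.rpow_natCast (A ^ α) k, ← Real.rpow_mul hA0.le]
    have hpos : 0 < A ^ (α * (k:ℕ)) * K := by
      apply mul_pos _ hK0
      exact Real.rpow_pos_of_pos hA0 _
    have step1 : ck α b k ≤ c ^ k / (A ^ (α * (k:ℕ)) * K) := by
      rw [ck, ← hc]
      exact div_le_div_of_nonneg_left (pow_nonneg hc0.le k) hpos hg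
    have step2 : c ^ k / (A ^ (α * (k:ℕ)) * K) = (c / A ^ α) ^ k / K := by
      rw [hApow, div_pow, div_div]
    have step3 : (c / A ^ α) ^ k ≤ (1/2 : ℝ) ^ k := by
      apply pow_le_pow_left₀ (by positivity)
      rw [div_le_div_iff₀ hAa0 (by norm_num : (0:ℝ) < 2)]
      linarith
    calc ck α b k ≤ c ^ k / (A ^ (α * (k:ℕ)) * K) := step1
      _ = (c / A ^ α) ^ k / K := step2
      _ ≤ (1/2) ^ k / K := by
          exact (div_le_div_iff_of_pos_right hK0).mpr step3
  exact Summable.of_nonneg_of_le (fun k => ck_nonneg hα hb.le k) hle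
    ((summable_geometric_of_lt_one (by norm_num) (by norm_num)).div_const K)

lemma term_nonneg (hα : 0 < α) (hb : 0 ≤ b) (k : ℕ) {t : ℝ} (ht : 0 ≤ t) :
    0 ≤ ck α b k * t ^ (α * k) :=
  mul_nonneg (ck_nonneg hα hb k) (Real.rpow_nonneg ht _)

lemma term_le_ck (hα : 0 < α) (hb : 0 ≤ b) (k : ℕ) {t : ℝ} (h0 : 0 ≤ t) (h1 : t ≤ 1) :
    ck α b k * t ^ (α * k) ≤ ck α b k :=
  mul_le_of_le_one_right (ck_nonneg hα hb k)
    (Real.rpow_le_one h0 h1 (by positivity))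

lemma term_summable (hα : 0 < α) (hb : 0 < b) {t : ℝ} (h0 : 0 ≤ t) (h1 : t ≤ 1) :
    Summable (fun k : ℕ => ck α b k * t ^ (α * k)) :=
  (ck_summable hα hb).of_nonneg_of_le (fun k => term_nonneg hα hb.le k h0)
    (fun k => term_le_ck hα hb.le k h0 h1)

/-- The comparison function `Φ(t) = E_α(b Γ(α) t^α)`. -/
noncomputable def Phi (α b t : ℝ) : ℝ := ∑' k : ℕ, ck α b k * t ^ (α * k)

lemma Phi_nonneg (hα : 0 < α) (hb : 0 ≤ b) {t : ℝ} (ht : 0 ≤ t) : 0 ≤ Phi α b t :=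
  tsum_nonneg (fun k => term_nonneg hα hb k ht)

lemma Phi_zero (hα : 0 < α) : Phi α b 0 = 1 := by
  rw [Phi, tsum_eq_single 0 ?_]
  · norm_num [ck_zero]
  · intro k hk
    rw [Real.zero_rpow ?_, mul_zero]
    have : (0:ℝ) < (k:ℝ) := by exact_mod_cast Nat.pos_of_ne_zero hk
    positivity

lemma one_le_Phi (hα : 0 < α) (hb : 0 < b) {t : ℝ} (h0 : 0 ≤ t) (h1 : t ≤ 1) :
    1 ≤ Phi α b t := by
  have h := Summable.le_tsum (term_summable hα hb h0 h1) 0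
    (fun k _ => term_nonneg hα hb.le k h0)
  simpa [ck_zero, Phi] using h

lemma Phi_cont (hα : 0 < α) (hb : 0 < b) : ContinuousOn (Phi α b) (Set.Icc 0 1) := by
  apply continuousOn_tsum (u := ck α b) ?_ (ck_summable hα hb) ?_
  · intro k
    apply Continuous.continuousOn
    have hc : Continuous fun t : ℝ => t ^ (α * k) := by
      rw [continuous_iff_continuousAt]; intro x
      exact Real.continuousAt_rpow_const x _ (Or.inr (by positivity))
    exact continuous_const.mul hc
  · intro k x hx
    rw [Real.norm_eq_abs, abs_of_nonneg (term_nonneg hα hb.le k hx.1)]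
    exact term_le_ck hα hb.le k hx.1 hx.2

/-- The real Beta integral in scaled form. -/
lemma beta_real {p q : ℝ} (hp : 0 < p) (hq : 0 < q) {t : ℝ} (ht : 0 < t) :
    ∫ s in (0:ℝ)..t, s ^ (p - 1) * (t - s) ^ (q - 1)
      = Real.Gamma p * Real.Gamma q / Real.Gamma (p + q) * t ^ (p + q - 1) := by
  have hGpq : Real.Gamma (p + q) ≠ 0 := (Real.Gamma_pos_of_pos (by linarith)).ne'
  have hbeta : Complex.betaIntegral p q
      = ((Real.Gamma p * Real.Gamma q / Real.Gamma (p + q) : ℝ) : ℂ) := by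
    have h := Complex.Gamma_mul_Gamma_eq_betaIntegral
      (s := (p:ℂ)) (t := (q:ℂ)) (by simpa using hp) (by simpa using hq)
    rw [← Complex.ofReal_add, Complex.Gamma_ofReal, Complex.Gamma_ofReal,
      Complex.Gamma_ofReal] at h
    rw [Complex.ofReal_div, Complex.ofReal_mul,
      eq_div_iff (by exact_mod_cast hGpq : ((Real.Gamma (p+q) : ℝ) : ℂ) ≠ 0)]
    rw [h]; ring
  have hscaled := Complex.betaIntegral_scaled (p:ℂ) (q:ℂ) ht
  have hcast : (∫ x in (0:ℝ)..t, ((x:ℂ) ^ ((p:ℂ) - 1) * (((t:ℝ):ℂ) - (x:ℂ)) ^ ((q:ℂ) - 1)))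
      = ((∫ s in (0:ℝ)..t, s ^ (p - 1) * (t - s) ^ (q - 1) : ℝ) : ℂ) := by
    rw [← intervalIntegral.integral_ofReal]
    apply intervalIntegral.integral_congr
    intro x hx
    rw [Set.uIcc_of_le ht.le] at hx
    show (x:ℂ) ^ ((p:ℂ) - 1) * (((t:ℝ):ℂ) - (x:ℂ)) ^ ((q:ℂ) - 1)
      = ((x ^ (p - 1) * (t - x) ^ (q - 1) : ℝ) : ℂ)
    rw [Complex.ofReal_mul, Complex.ofReal_cpow hx.1,
      Complex.ofReal_cpow (by linarith [hx.2] : (0:ℝ) ≤ t - x)]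
    push_cast
    ring
  rw [hcast, hbeta] at hscaled
  have hts : ((t:ℂ)) ^ ((p:ℂ) + (q:ℂ) - 1) = ((t ^ (p + q - 1) : ℝ) : ℂ) := by
    rw [Complex.ofReal_cpow ht.le]
    congr 1
    push_cast
    ring
  rw [hts, ← Complex.ofReal_mul] at hscaled
  have := Complex.ofReal_inj.mp hscaled
  rw [this]; ring

lemma ker_intable {r : ℝ} (hr : -1 < r) (t : ℝ) :
    IntervalIntegrable (fun s => (t - s) ^ r) volume 0 t := by
  have h := (intervalIntegral.intervalIntegrable_rpow' (a := 0) (b := t) hr).comp_sub_left t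
  simpa using h.symm

lemma ker_mul_intable (hα : 0 < α) {t : ℝ} (h0 : 0 ≤ t) (h1 : t ≤ 1) {φ : ℝ → ℝ}
    (hφ : ContinuousOn φ (Set.Icc 0 1)) :
    IntervalIntegrable (fun s => (t - s) ^ (α - 1) * φ s) volume 0 t := by
  apply (ker_intable (by linarith) t).mul_continuousOn
  apply hφ.mono
  rw [Set.uIcc_of_le h0]
  exact Set.Icc_subset_Icc le_rfl h1

lemma integral_term (hα : 0 < α) (k : ℕ) {t : ℝ} (ht : 0 < t) :
    ∫ s in (0:ℝ)..t, (t - s) ^ (α - 1) * s ^ (α * k)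
      = Real.Gamma (α * k + 1) * Real.Gamma α / Real.Gamma (α * (k+1) + 1)
          * t ^ (α * ((k:ℝ)+1)) := by
  have hb := beta_real (p := α * k + 1) (q := α) (by positivity) hα ht
  calc ∫ s in (0:ℝ)..t, (t - s) ^ (α - 1) * s ^ (α * k)
      = ∫ s in (0:ℝ)..t, s ^ (α * (k:ℝ) + 1 - 1) * (t - s) ^ (α - 1) := by
        apply intervalIntegral.integral_congr
        intro s _
        rw [show α * (k:ℝ) + 1 - 1 = α * k by ring]
        ring
    _ = Real.Gamma (α * k + 1) * Real.Gamma α / Real.Gamma (α * k + 1 + α)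
          * t ^ (α * k + 1 + α - 1) := hb
    _ = Real.Gamma (α * k + 1) * Real.Gamma α / Real.Gamma (α * (k+1) + 1)
          * t ^ (α * ((k:ℝ)+1)) := by
        rw [show α * (k:ℝ) + 1 + α = α * ((k:ℝ)+1) + 1 by ring,
          show α * ((k:ℝ)+1) + 1 - 1 = α * ((k:ℝ)+1) by ring]

lemma integral_term' (hα : 0 < α) (hb : 0 < b) (k : ℕ) {t : ℝ} (ht : 0 < t) :
    ∫ s in (0:ℝ)..t, (t - s) ^ (α - 1) * (ck α b k * s ^ (α * k))
      = ck α b (k+1) * t ^ (α * ((k:ℝ)+1)) / b := by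
  have heq : (fun s => (t - s) ^ (α - 1) * (ck α b k * s ^ (α * k)))
      = fun s => ck α b k * ((t - s) ^ (α - 1) * s ^ (α * k)) := by
    funext s; ring
  rw [heq, intervalIntegral.integral_const_mul, integral_term hα k ht, ck, ck]
  have h1 : Real.Gamma (α * k + 1) ≠ 0 := (gammak_pos hα k).ne'
  have h2 : Real.Gamma (α * ((k:ℝ)+1) + 1) ≠ 0 := by
    have h := (gammak_pos hα (k+1)).ne'
    rwa [show ((k+1:ℕ):ℝ) = (k:ℝ)+1 by push_cast; ring] at h
  push_cast
  field_simp
  ring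

lemma Phi_integral (hα : 0 < α) (hα1 : α < 1) (hb : 0 < b) {t : ℝ} (ht : 0 < t) (ht1 : t ≤ 1) :
    b * ∫ s in (0:ℝ)..t, (t - s) ^ (α - 1) * Phi α b s = Phi α b t - 1 := by
  set f : ℕ → ℝ → ℝ := fun k s => (t - s) ^ (α - 1) * (ck α b k * s ^ (α * k)) with hf
  have hfc : ∀ k : ℕ, ContinuousOn (fun s : ℝ => ck α b k * s ^ (α * k)) (Set.Icc 0 1) := by
    intro k
    apply Continuous.continuousOn
    refine continuous_const.mul ?_
    rw [continuous_iff_continuousAt]; intro x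
    exact Real.continuousAt_rpow_const x _ (Or.inr (by positivity))
  have hintk : ∀ k : ℕ, IntervalIntegrable (f k) volume 0 t := fun k =>
    ker_mul_intable hα ht.le ht1 (hfc k)
  have hintk' : ∀ k : ℕ, IntegrableOn (f k) (Set.Ioc 0 t) := fun k =>
    (intervalIntegrable_iff_integrableOn_Ioc_of_le ht.le).mp (hintk k)
  have hnn : ∀ k : ℕ, ∀ s ∈ Set.Ioc (0:ℝ) t, 0 ≤ f k s := by
    intro k s hs
    apply mul_nonneg (Real.rpow_nonneg (by linarith [hs.2]) _)
    exact term_nonneg hα hb.le k hs.1.le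
  have hval : ∀ k : ℕ, ∫ s in Set.Ioc (0:ℝ) t, f k s
      = ck α b (k+1) * t ^ (α * ((k:ℝ)+1)) / b := by
    intro k
    rw [← intervalIntegral.integral_of_le ht.le]
    exact integral_term' hα hb k ht
  have hcast : (fun k : ℕ => ck α b (k+1) * t ^ (α * ((k:ℝ)+1)))
      = fun k : ℕ => ck α b (k+1) * t ^ (α * ((k+1:ℕ):ℝ)) := by
    funext k; push_cast; rfl
  have hsum2 : Summable (fun k : ℕ => ck α b (k+1) * t ^ (α * ((k:ℝ)+1)) / b) := by
    have h1 : Summable (fun k : ℕ => ck α b (k+1) * t ^ (α * ((k+1:ℕ):ℝ)) / b) :=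
      ((summable_nat_add_iff 1).mpr (term_summable hα hb ht.le ht1)).div_const b
    have h2 : (fun k : ℕ => ck α b (k+1) * t ^ (α * ((k:ℝ)+1)) / b)
        = fun k : ℕ => ck α b (k+1) * t ^ (α * ((k+1:ℕ):ℝ)) / b := by
      funext k; push_cast; rfl
    rw [h2]; exact h1
  have hnn2 : ∀ k : ℕ, 0 ≤ ck α b (k+1) * t ^ (α * ((k:ℝ)+1)) / b := by
    intro k
    apply div_nonneg _ hb.le
    exact mul_nonneg (ck_nonneg hα hb.le (k+1)) (Real.rpow_nonneg ht.le _)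
  have hlint : (∑' k : ℕ, ∫⁻ s, ‖f k s‖₊ ∂(volume.restrict (Set.Ioc 0 t))) ≠ ⊤ := by
    have heq : ∀ k : ℕ, (∫⁻ s, ‖f k s‖₊ ∂(volume.restrict (Set.Ioc 0 t)))
        = ENNReal.ofReal (ck α b (k+1) * t ^ (α * ((k:ℝ)+1)) / b) := by
      intro k
      rw [← hval k, ofReal_integral_eq_lintegral_ofReal (hintk' k)
        ((ae_restrict_iff' measurableSet_Ioc).mpr (Filter.Eventually.of_forall (hnn k)))]
      apply lintegral_congr_ae
      filter_upwards [(ae_restrict_iff' measurableSet_Ioc).mpr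
        (Filter.Eventually.of_forall (hnn k))] with s hs
      rw [← Real.enorm_eq_ofReal hs, enorm_eq_nnnorm]
    rw [tsum_congr heq, ← ENNReal.ofReal_tsum_of_nonneg hnn2 hsum2]
    exact ENNReal.ofReal_ne_top
  have hswap := MeasureTheory.integral_tsum (μ := volume.restrict (Set.Ioc 0 t))
    (fun k => (hintk' k).aestronglyMeasurable) hlint
  have hstep : ∫ s in (0:ℝ)..t, (t - s) ^ (α - 1) * Phi α b s
      = ∑' k : ℕ, ck α b (k+1) * t ^ (α * ((k:ℝ)+1)) / b := by
    rw [intervalIntegral.integral_of_le ht.le]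
    have hpt : ∀ s : ℝ, (t - s) ^ (α - 1) * Phi α b s = ∑' k : ℕ, f k s := by
      intro s
      rw [Phi, hf, tsum_mul_left]
    calc (∫ s in Set.Ioc (0:ℝ) t, (t - s) ^ (α - 1) * Phi α b s)
        = ∫ s in Set.Ioc (0:ℝ) t, ∑' k : ℕ, f k s := by
          apply setIntegral_congr_fun measurableSet_Ioc
          intro s _; exact hpt s
      _ = ∑' k : ℕ, ∫ s in Set.Ioc (0:ℝ) t, f k s := hswap
      _ = ∑' k : ℕ, ck α b (k+1) * t ^ (α * ((k:ℝ)+1)) / b := tsum_congr hval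
  rw [hstep, tsum_div_const, mul_div_cancel₀ _ hb.ne']
  have hz := Summable.tsum_eq_zero_add (term_summable hα hb (t := t) ht.le ht1)
  rw [Phi, hz, ck_zero, hcast]
  norm_num

end SGron

theorem stmt_5 (γ b : ℝ) (hγ0 : 0 < γ) (hγ1 : γ < 1) (hb : 0 < b)
    (g H : ℝ → ℝ)
    (hg : ContinuousOn g (Set.Icc 0 1))
    (hgmono : ∀ s ∈ Set.Icc (0:ℝ) 1, ∀ t ∈ Set.Icc (0:ℝ) 1, s ≤ t → g s ≤ g t)
    (hH : ContinuousOn H (Set.Icc 0 1))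
    (hHpos : ∀ t ∈ Set.Icc (0:ℝ) 1, 0 ≤ H t)
    (hrec : ∀ t ∈ Set.Icc (0:ℝ) 1, H t ≤ g t + b * ∫ s in (0:ℝ)..t, (t - s) ^ (-γ) * H s) :
    ∀ t ∈ Set.Icc (0:ℝ) 1,
      H t ≤ mittagLeffler (1 - γ) (Real.Gamma (1 - γ) * t ^ (1 - γ) * b) * g t := by
  intro t htI
  set α : ℝ := 1 - γ with hαdef
  have hα : 0 < α := by rw [hαdef]; linarith
  have hα1 : α < 1 := by rw [hαdef]; linarith
  have hγα : -γ = α - 1 := by rw [hαdef]; ring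
  have hrec' : ∀ u ∈ Set.Icc (0:ℝ) 1,
      H u ≤ g u + b * ∫ s in (0:ℝ)..u, (u - s) ^ (α - 1) * H s := by
    intro u hu
    have h := hrec u hu
    rwa [hγα] at h
  have hML : mittagLeffler α (Real.Gamma α * t ^ α * b) = SGron.Phi α b t := by
    rw [mittagLeffler, SGron.Phi]
    apply tsum_congr
    intro k
    rw [SGron.ck]
    have hpow : (Real.Gamma α * t ^ α * b) ^ k = (b * Real.Gamma α) ^ k * t ^ (α * k) := by
      rw [mul_pow, mul_pow, ← Real.rpow_natCast (t ^ α) k, ← Real.rpow_mul htI.1]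
      ring
    rw [hpow]
    ring
  rw [hML]
  -- main claim with slack ε
  have claim : ∀ ε : ℝ, 0 < ε → ∀ u ∈ Set.Icc (0:ℝ) 1,
      H u ≤ SGron.Phi α b u * (g u + ε) := by
    intro ε hε
    set ψ : ℝ → ℝ := fun u => SGron.Phi α b u * (g u + ε) with hψ
    have hψc : ContinuousOn ψ (Set.Icc 0 1) :=
      (SGron.Phi_cont hα hb).mul (hg.add continuousOn_const)
    have key : ∀ T ∈ Set.Icc (0:ℝ) 1, (∀ s ∈ Set.Ico (0:ℝ) T, H s ≤ ψ s) → H T ≤ ψ T - ε := by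
      intro T hT hprev
      rcases eq_or_lt_of_le hT.1 with h0 | h0
      · -- T = 0
        have h := hrec' 0 ⟨le_refl 0, zero_le_one⟩
        rw [intervalIntegral.integral_same, mul_zero, add_zero] at h
        have hψ0 : ψ 0 = g 0 + ε := by
          rw [hψ]; simp only []; rw [SGron.Phi_zero hα]; ring
        rw [← h0, hψ0]
        linarith
      · -- 0 < T
        have hT1 : T ≤ 1 := hT.2
        have hkerH : IntervalIntegrable (fun s => (T - s) ^ (α - 1) * H s) volume 0 T :=
          SGron.ker_mul_intable hα h0.le hT1 hH
        have hkerψ : IntervalIntegrable (fun s => (T - s) ^ (α - 1) * ψ s) volume 0 T :=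
          SGron.ker_mul_intable hα h0.le hT1 hψc
        have hkerC : IntervalIntegrable
            (fun s => (T - s) ^ (α - 1) * (SGron.Phi α b s * (g T + ε))) volume 0 T :=
          SGron.ker_mul_intable hα h0.le hT1 ((SGron.Phi_cont hα hb).mul continuousOn_const)
        have hmono1 : (∫ s in (0:ℝ)..T, (T - s) ^ (α - 1) * H s)
            ≤ ∫ s in (0:ℝ)..T, (T - s) ^ (α - 1) * ψ s := by
          rw [intervalIntegral.integral_of_le h0.le, intervalIntegral.integral_of_le h0.le]
          apply setIntegral_mono_on
            ((intervalIntegrable_iff_integrableOn_Ioc_of_le h0.le).mp hkerH)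
            ((intervalIntegrable_iff_integrableOn_Ioc_of_le h0.le).mp hkerψ)
            measurableSet_Ioc
          intro s hs
          rcases lt_or_eq_of_le hs.2 with hsT | hsT
          · have hker : 0 ≤ (T - s) ^ (α - 1) := Real.rpow_nonneg (by linarith) _
            exact mul_le_mul_of_nonneg_left (hprev s ⟨hs.1.le, hsT⟩) hker
          · rw [hsT, sub_self, Real.zero_rpow (by linarith : α - 1 ≠ 0), zero_mul, zero_mul]
        have hmono2 : (∫ s in (0:ℝ)..T, (T - s) ^ (α - 1) * ψ s)
            ≤ ∫ s in (0:ℝ)..T, (T - s) ^ (α - 1) * (SGron.Phi α b s * (g T + ε)) := by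
          rw [intervalIntegral.integral_of_le h0.le, intervalIntegral.integral_of_le h0.le]
          apply setIntegral_mono_on
            ((intervalIntegrable_iff_integrableOn_Ioc_of_le h0.le).mp hkerψ)
            ((intervalIntegrable_iff_integrableOn_Ioc_of_le h0.le).mp hkerC)
            measurableSet_Ioc
          intro s hs
          have hker : 0 ≤ (T - s) ^ (α - 1) := Real.rpow_nonneg (by linarith [hs.2]) _
          apply mul_le_mul_of_nonneg_left _ hker
          rw [hψ]
          have hgs : g s ≤ g T := hgmono s ⟨hs.1.le, hs.2.trans hT1⟩ T hT hs.2
          have hΦs : 0 ≤ SGron.Phi α b s := SGron.Phi_nonneg hα hb.le hs.1.le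
          exact mul_le_mul_of_nonneg_left (by linarith) hΦs
        have hval : (∫ s in (0:ℝ)..T, (T - s) ^ (α - 1) * (SGron.Phi α b s * (g T + ε)))
            = (g T + ε) * ((SGron.Phi α b T - 1) / b) := by
          have heq : (fun s => (T - s) ^ (α - 1) * (SGron.Phi α b s * (g T + ε)))
              = fun s => (g T + ε) * ((T - s) ^ (α - 1) * SGron.Phi α b s) := by
            funext s; ring
          rw [heq, intervalIntegral.integral_const_mul]
          congr 1
          have hPI := SGron.Phi_integral hα hα1 hb h0 hT1
          field_simp
          linarith [hPI]
        have hr := hrec' T hT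
        have hint_le : b * (∫ s in (0:ℝ)..T, (T - s) ^ (α - 1) * H s)
            ≤ b * ((g T + ε) * ((SGron.Phi α b T - 1) / b)) := by
          apply mul_le_mul_of_nonneg_left _ hb.le
          calc (∫ s in (0:ℝ)..T, (T - s) ^ (α - 1) * H s)
              ≤ ∫ s in (0:ℝ)..T, (T - s) ^ (α - 1) * ψ s := hmono1
            _ ≤ ∫ s in (0:ℝ)..T, (T - s) ^ (α - 1) * (SGron.Phi α b s * (g T + ε)) := hmono2
            _ = (g T + ε) * ((SGron.Phi α b T - 1) / b) := hval
        have hbcancel : b * ((g T + ε) * ((SGron.Phi α b T - 1) / b))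
            = (g T + ε) * (SGron.Phi α b T - 1) := by
          field_simp
        have hψT : ψ T = SGron.Phi α b T * (g T + ε) := rfl
        rw [hψT]
        have := hr.trans (by linarith : g T + b * (∫ s in (0:ℝ)..T, (T - s) ^ (α - 1) * H s)
          ≤ g T + (g T + ε) * (SGron.Phi α b T - 1))
        linarith [this]
    -- the crossing argument
    set S : Set ℝ := {u | u ∈ Set.Icc (0:ℝ) 1 ∧ ∀ s ∈ Set.Icc (0:ℝ) u, H s ≤ ψ s} with hSdef
    have h0S : (0:ℝ) ∈ S := by
      refine ⟨⟨le_refl 0, zero_le_one⟩, ?_⟩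
      intro s hs
      have hs0 : s = 0 := le_antisymm hs.2 hs.1
      rw [hs0]
      have h := key 0 ⟨le_refl 0, zero_le_one⟩
        (by intro s hs'; exact absurd hs'.2 (not_lt.mpr hs'.1))
      linarith
    have hbdd : BddAbove S := ⟨1, fun x hx => hx.1.2⟩
    have hne : S.Nonempty := ⟨0, h0S⟩
    set T := sSup S with hTdef
    have hT0 : 0 ≤ T := le_csSup hbdd h0S
    have hT1 : T ≤ 1 := csSup_le hne fun x hx => hx.1.2
    have hTpre : ∀ s ∈ Set.Ico (0:ℝ) T, H s ≤ ψ s := by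
      intro s hs
      obtain ⟨x, hxS, hsx⟩ := exists_lt_of_lt_csSup hne hs.2
      exact hxS.2 s ⟨hs.1, hsx.le⟩
    have hHT : H T ≤ ψ T - ε := key T ⟨hT0, hT1⟩ hTpre
    have hTS : T ∈ S := by
      refine ⟨⟨hT0, hT1⟩, ?_⟩
      intro s hs
      rcases lt_or_eq_of_le hs.2 with h | h
      · exact hTpre s ⟨hs.1, h⟩
      · rw [h]; linarith
    have hTeq : T = 1 := by
      by_contra hne1
      have hTlt : T < 1 := lt_of_le_of_ne hT1 hne1
      have hDc : ContinuousWithinAt (fun u => H u - ψ u) (Set.Icc 0 1) T :=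
        (hH.sub hψc) T ⟨hT0, hT1⟩
      have hev : ∀ᶠ u in nhdsWithin T (Set.Icc 0 1), H u - ψ u < 0 :=
        Filter.Tendsto.eventually_lt_const (by linarith : H T - ψ T < 0) hDc
      rw [eventually_nhdsWithin_iff, Metric.eventually_nhds_iff] at hev
      obtain ⟨δ, hδ, hball⟩ := hev
      set T' := min 1 (T + δ/2) with hT'def
      have hTT' : T < T' := lt_min hTlt (by linarith)
      have hT'1 : T' ≤ 1 := min_le_left _ _
      have hT'S : T' ∈ S := by
        refine ⟨⟨by linarith, hT'1⟩, ?_⟩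
        intro s hs
        rcases le_or_gt s T with h | h
        · exact hTS.2 s ⟨hs.1, h⟩
        · have hsI : s ∈ Set.Icc (0:ℝ) 1 := ⟨hs.1, hs.2.trans hT'1⟩
          have hd : dist s T < δ := by
            rw [Real.dist_eq, abs_of_pos (by linarith)]
            have hsT' : s ≤ T + δ/2 := hs.2.trans (min_le_right _ _)
            linarith
          have := hball hd hsI
          linarith
      have hcontra := le_csSup hbdd hT'S
      rw [← hTdef] at hcontra
      linarith
    intro u hu
    apply hTS.2 u
    rw [hTeq]
    exact hu
  -- let ε → 0
  have hPhi1 : 1 ≤ SGron.Phi α b t := SGron.one_le_Phi hα hb htI.1 htI.2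
  by_contra hcon
  push_neg at hcon
  set d := H t - SGron.Phi α b t * g t with hd
  have hd0 : 0 < d := by rw [hd]; linarith
  have hεpos : 0 < d / (2 * SGron.Phi α b t) := div_pos hd0 (by linarith)
  have hcl := claim _ hεpos t htI
  have hmul : SGron.Phi α b t * (d / (2 * SGron.Phi α b t)) = d / 2 := by
    field_simp
  rw [mul_add, hmul] at hcl
  rw [hd] at hcl
  linarith
end

section
/- Let 0 < β < 1/2, h = 1/N for a positive integer N, set t_i = i·h, and let η(s) = t_i for s ∈ [t_i, t_{i+1}). Then for every 0 ≤ n ≤ N-1, ∫₀^{t_{n+1}} [(t_{n+1}-s)^(-β) - (t_{n+1}-η(s))^(-β)]² ds ≤ C · h^(1-2β), where C is a constant depending only on β. -/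
open Real MeasureTheory

private lemma rpow_mvt_aux (β : ℝ) (hβ0 : 0 < β) {a b : ℝ} (ha : 0 < a) (hab : a ≤ b) :
    a ^ (-β) - b ^ (-β) ≤ β * (b - a) * a ^ (-β - 1) := by
  rcases eq_or_lt_of_le hab with rfl | hab'
  · simp
  have hcont : ContinuousOn (fun x : ℝ => x ^ (-β)) (Set.Icc a b) := by
    apply ContinuousOn.rpow_const continuousOn_id
    intro x hx
    exact Or.inl (ne_of_gt (lt_of_lt_of_le ha hx.1))
  have hderiv : ∀ x ∈ Set.Ioo a b,
      HasDerivAt (fun x : ℝ => x ^ (-β)) (-β * x ^ (-β - 1)) x := by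
    intro x hx
    exact Real.hasDerivAt_rpow_const (Or.inl (ne_of_gt (lt_trans ha hx.1)))
  obtain ⟨c, hc, hc'⟩ := exists_hasDerivAt_eq_slope _ _ hab' hcont hderiv
  have hba : 0 < b - a := by linarith
  rw [eq_comm, div_eq_iff (ne_of_gt hba)] at hc'
  have h1 : a ^ (-β) - b ^ (-β) = β * c ^ (-β - 1) * (b - a) := by
    linear_combination -hc'
  have h2 : c ^ (-β - 1) ≤ a ^ (-β - 1) :=
    Real.rpow_le_rpow_of_nonpos ha hc.1.le (by linarith)
  calc a ^ (-β) - b ^ (-β) = β * c ^ (-β - 1) * (b - a) := h1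
    _ ≤ β * a ^ (-β - 1) * (b - a) := by
        apply mul_le_mul_of_nonneg_right _ hba.le
        exact mul_le_mul_of_nonneg_left h2 hβ0.le
    _ = β * (b - a) * a ^ (-β - 1) := by ring

theorem stmt_7 (β : ℝ) (hβ0 : 0 < β) (hβ1 : β < 1/2) :
    ∃ C > 0, ∀ N : ℕ, 0 < N → ∀ n : ℕ, n ≤ N - 1 →
      ∫ s in (0:ℝ)..((n + 1 : ℝ) / N),
          (((n + 1 : ℝ) / N - s) ^ (-β) - ((n + 1 : ℝ) / N - (↑⌊s * N⌋ : ℝ) / N) ^ (-β)) ^ 2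
        ≤ C * ((1 : ℝ) / N) ^ (1 - 2 * β) := by
  have h12 : 0 < 1 - 2 * β := by linarith
  have h12' : 0 < 1 + 2 * β := by linarith
  refine ⟨β ^ 2 / (1 + 2 * β) + 1 / (1 - 2 * β),
    add_pos (div_pos (by positivity) h12') (div_pos one_pos h12), ?_⟩
  intro N hN n _
  set Nr : ℝ := (N : ℝ) with hNrdef
  have hNr : 0 < Nr := by rw [hNrdef]; exact_mod_cast hN
  set T : ℝ := ((n : ℝ) + 1) / Nr with hTdef
  set tn : ℝ := (n : ℝ) / Nr with htndef
  set h : ℝ := 1 / Nr with hhdef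
  have hh : 0 < h := by rw [hhdef]; exact div_pos one_pos hNr
  have htn0 : 0 ≤ tn := by rw [htndef]; positivity
  have hT : T = tn + h := by rw [hTdef, htndef, hhdef]; ring
  have htnT : tn ≤ T := by rw [hT]; linarith
  have hT0 : 0 < T := by rw [hT]; linarith
  -- basic floor facts
  have hη_le : ∀ s : ℝ, ((⌊s * Nr⌋ : ℤ) : ℝ) / Nr ≤ s := by
    intro s
    rw [div_le_iff₀ hNr]
    exact Int.floor_le _
  have hη_ge : ∀ s : ℝ, s - ((⌊s * Nr⌋ : ℤ) : ℝ) / Nr ≤ h := by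
    intro s
    have h1 := Int.lt_floor_add_one (s * Nr)
    rw [hhdef, sub_le_iff_le_add, ← add_div, le_div_iff₀ hNr]
    linarith
  -- measurability of the integrand
  have hfm : Measurable (fun s : ℝ =>
      ((T - s) ^ (-β) - (T - ((⌊s * Nr⌋ : ℤ) : ℝ) / Nr) ^ (-β)) ^ 2) := by
    have h1 : Measurable (fun s : ℝ => ((⌊s * Nr⌋ : ℤ) : ℝ) / Nr) :=
      (measurable_from_top.comp ((measurable_id.mul_const Nr).floor)).div_const Nr
    fun_prop
  -- pointwise bound on [0, tn]
  have pt1 : ∀ s ∈ Set.Icc (0:ℝ) tn,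
      ((T - s) ^ (-β) - (T - ((⌊s * Nr⌋ : ℤ) : ℝ) / Nr) ^ (-β)) ^ 2
        ≤ β ^ 2 * h ^ 2 * (T - s) ^ ((-β - 1) * 2) := by
    intro s hs
    have ha : 0 < T - s := by
      have : s ≤ tn := hs.2
      rw [hT]; linarith
    have hab : T - s ≤ T - ((⌊s * Nr⌋ : ℤ) : ℝ) / Nr := by linarith [hη_le s]
    have hd0 : 0 ≤ (T - s) ^ (-β) - (T - ((⌊s * Nr⌋ : ℤ) : ℝ) / Nr) ^ (-β) := by
      have := Real.rpow_le_rpow_of_nonpos ha hab (neg_nonpos.mpr hβ0.le)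
      linarith
    have hd1 : (T - s) ^ (-β) - (T - ((⌊s * Nr⌋ : ℤ) : ℝ) / Nr) ^ (-β)
        ≤ β * h * (T - s) ^ (-β - 1) := by
      have h1 := rpow_mvt_aux β hβ0 ha hab
      have h2 : (T - ((⌊s * Nr⌋ : ℤ) : ℝ) / Nr) - (T - s) ≤ h := by
        have := hη_ge s; linarith
      have h3 : (0:ℝ) ≤ (T - s) ^ (-β - 1) := Real.rpow_nonneg ha.le _
      calc (T - s) ^ (-β) - (T - ((⌊s * Nr⌋ : ℤ) : ℝ) / Nr) ^ (-β)
          ≤ β * ((T - ((⌊s * Nr⌋ : ℤ) : ℝ) / Nr) - (T - s)) * (T - s) ^ (-β - 1) := h1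
        _ ≤ β * h * (T - s) ^ (-β - 1) := by
            apply mul_le_mul_of_nonneg_right _ h3
            exact mul_le_mul_of_nonneg_left h2 hβ0.le
    calc ((T - s) ^ (-β) - (T - ((⌊s * Nr⌋ : ℤ) : ℝ) / Nr) ^ (-β)) ^ 2
        ≤ (β * h * (T - s) ^ (-β - 1)) ^ 2 := pow_le_pow_left₀ hd0 hd1 2
      _ = β ^ 2 * h ^ 2 * ((T - s) ^ (-β - 1)) ^ 2 := by ring
      _ = β ^ 2 * h ^ 2 * (T - s) ^ ((-β - 1) * 2) := by
          rw [← Real.rpow_natCast ((T - s) ^ (-β - 1)) 2, ← Real.rpow_mul ha.le]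
          norm_num
  -- pointwise bound on [tn, T]
  have pt2 : ∀ s ∈ Set.Icc tn T,
      ((T - s) ^ (-β) - (T - ((⌊s * Nr⌋ : ℤ) : ℝ) / Nr) ^ (-β)) ^ 2
        ≤ (T - s) ^ (-(2 * β)) := by
    intro s hs
    rcases eq_or_lt_of_le hs.2 with rfl | hsT
    · -- s = T
      have hTN : T * Nr = (n : ℝ) + 1 := by
        rw [hTdef]; field_simp
      have hfl2 : ⌊T * Nr⌋ = ((n + 1 : ℕ) : ℤ) := by
        rw [hTN, show ((n : ℝ) + 1) = ((n + 1 : ℕ) : ℝ) from by push_cast; ring,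
          Int.floor_natCast]
      have hfl : ((⌊T * Nr⌋ : ℤ) : ℝ) / Nr = T := by
        rw [hfl2, hTdef]; push_cast; ring
      rw [hfl, sub_self]
      simp [Real.zero_rpow (ne_of_lt (show -(2*β) < 0 by linarith)),
        Real.zero_rpow (ne_of_lt (show -β < 0 by linarith))]
    · have ha : 0 < T - s := by linarith
      have hab : T - s ≤ T - ((⌊s * Nr⌋ : ℤ) : ℝ) / Nr := by linarith [hη_le s]
      have hd0 : 0 ≤ (T - s) ^ (-β) - (T - ((⌊s * Nr⌋ : ℤ) : ℝ) / Nr) ^ (-β) := by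
        have := Real.rpow_le_rpow_of_nonpos ha hab (neg_nonpos.mpr hβ0.le)
        linarith
      have hd1 : (T - s) ^ (-β) - (T - ((⌊s * Nr⌋ : ℤ) : ℝ) / Nr) ^ (-β) ≤ (T - s) ^ (-β) := by
        have : (0:ℝ) ≤ (T - ((⌊s * Nr⌋ : ℤ) : ℝ) / Nr) ^ (-β) :=
          Real.rpow_nonneg (by linarith) _
        linarith
      calc ((T - s) ^ (-β) - (T - ((⌊s * Nr⌋ : ℤ) : ℝ) / Nr) ^ (-β)) ^ 2
          ≤ ((T - s) ^ (-β)) ^ 2 := pow_le_pow_left₀ hd0 hd1 2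
        _ = (T - s) ^ (-(2 * β)) := by
            rw [← Real.rpow_natCast ((T - s) ^ (-β)) 2, ← Real.rpow_mul ha.le]
            norm_num; ring_nf
  -- integrability of the dominating functions
  have hg1cont : ContinuousOn (fun s : ℝ => β ^ 2 * h ^ 2 * (T - s) ^ ((-β - 1) * 2))
      (Set.uIcc (0:ℝ) tn) := by
    apply ContinuousOn.mul continuousOn_const
    apply ContinuousOn.rpow_const (continuousOn_const.sub continuousOn_id)
    intro x hx
    rw [Set.uIcc_of_le htn0] at hx
    left
    have : x ≤ tn := hx.2
    have : 0 < T - x := by rw [hT]; linarith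
    exact ne_of_gt this
  have hg1int : IntervalIntegrable (fun s : ℝ => β ^ 2 * h ^ 2 * (T - s) ^ ((-β - 1) * 2))
      volume 0 tn := hg1cont.intervalIntegrable
  have hg2int : IntervalIntegrable (fun s : ℝ => (T - s) ^ (-(2 * β))) volume tn T := by
    have base : IntervalIntegrable (fun x : ℝ => x ^ (-(2 * β))) volume (T - tn) (T - T) :=
      intervalIntegral.intervalIntegrable_rpow' (by linarith)
    have := base.comp_sub_left T
    simpa using this
  -- integrability of the integrand on both pieces
  have hint1 : IntervalIntegrable (fun s : ℝ =>
      ((T - s) ^ (-β) - (T - ((⌊s * Nr⌋ : ℤ) : ℝ) / Nr) ^ (-β)) ^ 2) volume 0 tn := by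
    apply hg1int.mono_fun' hfm.aestronglyMeasurable.restrict
    apply ae_restrict_of_forall_mem measurableSet_uIoc
    intro x hx
    rw [Set.uIoc_of_le htn0] at hx
    have hx' : x ∈ Set.Icc (0:ℝ) tn := ⟨hx.1.le, hx.2⟩
    have := pt1 x hx'
    simp only [Real.norm_eq_abs]
    rw [abs_of_nonneg (sq_nonneg _)]
    exact this
  have hint2 : IntervalIntegrable (fun s : ℝ =>
      ((T - s) ^ (-β) - (T - ((⌊s * Nr⌋ : ℤ) : ℝ) / Nr) ^ (-β)) ^ 2) volume tn T := by
    apply hg2int.mono_fun' hfm.aestronglyMeasurable.restrict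
    apply ae_restrict_of_forall_mem measurableSet_uIoc
    intro x hx
    rw [Set.uIoc_of_le htnT] at hx
    have hx' : x ∈ Set.Icc tn T := ⟨hx.1.le, hx.2⟩
    have := pt2 x hx'
    simp only [Real.norm_eq_abs]
    rw [abs_of_nonneg (sq_nonneg _)]
    exact this
  -- value of the two dominating integrals
  have hval1 : (∫ s in (0:ℝ)..tn, β ^ 2 * h ^ 2 * (T - s) ^ ((-β - 1) * 2))
      ≤ β ^ 2 / (1 + 2 * β) * h ^ (1 - 2 * β) := by
    rw [intervalIntegral.integral_const_mul]
    have hcomp := intervalIntegral.integral_comp_sub_left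
      (a := (0:ℝ)) (b := tn) (fun x : ℝ => x ^ ((-β - 1) * 2)) T
    rw [hcomp, sub_zero, show T - tn = h from by rw [hT]; ring]
    rw [integral_rpow (Or.inr ⟨by intro hc; nlinarith, Set.notMem_uIcc_of_lt hh hT0⟩)]
    have he : (-β - 1) * 2 + 1 = -(2 * β) - 1 := by ring
    rw [he]
    have hTe : 0 ≤ T ^ (-(2 * β) - 1) := Real.rpow_nonneg hT0.le _
    have hhe : (0:ℝ) < h ^ (-(2 * β) - 1) := Real.rpow_pos_of_pos hh _
    have hdiv : (T ^ (-(2 * β) - 1) - h ^ (-(2 * β) - 1)) / (-(2 * β) - 1)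
        ≤ h ^ (-(2 * β) - 1) / (1 + 2 * β) := by
      have hc : -(2 * β) - 1 < 0 := by linarith
      rw [div_le_iff_of_neg hc]
      have heq : h ^ (-(2 * β) - 1) / (1 + 2 * β) * (-(2 * β) - 1) = -(h ^ (-(2 * β) - 1)) := by
        field_simp; ring
      rw [heq]
      linarith
    have h2 : h ^ 2 * h ^ (-(2 * β) - 1) = h ^ (1 - 2 * β) := by
      rw [← Real.rpow_natCast h 2, ← Real.rpow_add hh]
      congr 1
      push_cast; ring
    refine le_trans (mul_le_mul_of_nonneg_left hdiv (by positivity)) (le_of_eq ?_)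
    calc β ^ 2 * h ^ 2 * (h ^ (-(2 * β) - 1) / (1 + 2 * β))
        = β ^ 2 / (1 + 2 * β) * (h ^ 2 * h ^ (-(2 * β) - 1)) := by ring
      _ = β ^ 2 / (1 + 2 * β) * h ^ (1 - 2 * β) := by rw [h2]
  have hval2 : (∫ s in tn..T, (T - s) ^ (-(2 * β)))
      = 1 / (1 - 2 * β) * h ^ (1 - 2 * β) := by
    have hcomp := intervalIntegral.integral_comp_sub_left
      (a := tn) (b := T) (fun x : ℝ => x ^ (-(2 * β))) T
    rw [hcomp, sub_self, show T - tn = h from by rw [hT]; ring]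
    rw [integral_rpow (Or.inl (by linarith))]
    rw [Real.zero_rpow (by intro hc; nlinarith)]
    rw [show -(2 * β) + 1 = 1 - 2 * β from by ring]
    ring
  -- put everything together
  calc ∫ s in (0:ℝ)..T, ((T - s) ^ (-β) - (T - ((⌊s * Nr⌋ : ℤ) : ℝ) / Nr) ^ (-β)) ^ 2
      = (∫ s in (0:ℝ)..tn, ((T - s) ^ (-β) - (T - ((⌊s * Nr⌋ : ℤ) : ℝ) / Nr) ^ (-β)) ^ 2)
        + ∫ s in tn..T, ((T - s) ^ (-β) - (T - ((⌊s * Nr⌋ : ℤ) : ℝ) / Nr) ^ (-β)) ^ 2 :=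
        (intervalIntegral.integral_add_adjacent_intervals hint1 hint2).symm
    _ ≤ (∫ s in (0:ℝ)..tn, β ^ 2 * h ^ 2 * (T - s) ^ ((-β - 1) * 2))
        + ∫ s in tn..T, (T - s) ^ (-(2 * β)) := by
        apply add_le_add
        · exact intervalIntegral.integral_mono_on htn0 hint1 hg1int pt1
        · exact intervalIntegral.integral_mono_on htnT hint2 hg2int pt2
    _ ≤ β ^ 2 / (1 + 2 * β) * h ^ (1 - 2 * β) + 1 / (1 - 2 * β) * h ^ (1 - 2 * β) := by
        rw [hval2]; exact add_le_add_left hval1 _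
    _ = (β ^ 2 / (1 + 2 * β) + 1 / (1 - 2 * β)) * h ^ (1 - 2 * β) := by ring
end
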